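/- For any integer n ≥ 5 with n ≠ 28: if a ∈ {1/4, 1/5, 2/5, 3/7, 1/3} and a = (2 - 4/n)/s or a = (1 - 4/n)/s for some positive integer s, then either a or 1 - a belongs to {2/n, 4/n, 1/3 + 4/(3n)}. -/

import Mathlib

theorem stmt_4 (n : ℤ) (hn : 5 ≤ n) (hn28 : n ≠ 28) (a : ℝ)
    (ha : a ∈ ({1/4, 1/5, 2/5, 3/7, 1/3} : Set ℝ))
    (hs : ∃ s : ℕ, 0 < s ∧ (a = (2 - 4/(n:ℝ))/s ∨ a = (1 - 4/(n:ℝ))/s)) :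
    a ∈ ({2/(n:ℝ), 4/(n:ℝ), 1/3 + 4/(3*(n:ℝ))} : Set ℝ) ∨
    1 - a ∈ ({2/(n:ℝ), 4/(n:ℝ), 1/3 + 4/(3*(n:ℝ))} : Set ℝ) := by
  obtain ⟨s, hs0, heq⟩ := hs
  have hn0 : (0:ℝ) < (n:ℝ) := by exact_mod_cast lt_of_lt_of_le (by norm_num) hn
  have hs0' : (s:ℝ) ≠ 0 := Nat.cast_ne_zero.mpr hs0.ne'
  simp only [Set.mem_insert_iff, Set.mem_singleton_iff] at ha ⊢
  rcases ha with rfl|rfl|rfl|rfl|rfl <;> rcases heq with heq|heq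
  · field_simp at heq
    have hZ : n * ↑s = (2 * n - 4) * 4 := by linear_combination (by exact_mod_cast heq : n * ↑s = 4 * (2 * n - 4))
    have hsB : s ≤ 7 := by nlinarith [hZ, hn, hs0]
    interval_cases s <;> push_cast at hZ
    · omega
    · omega
    · omega
    · omega
    · omega
    · have hn' : n = 8 := by omega
      subst hn'
      norm_num
    · have hn' : n = 16 := by omega
      subst hn'
      norm_num
  · field_simp at heq
    have hZ : n * ↑s = (n - 4) * 4 := by linear_combination (by exact_mod_cast heq : n * ↑s = 4 * (n - 4))
    have hsB : s ≤ 3 := by nlinarith [hZ, hn, hs0]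
    interval_cases s <;> push_cast at hZ
    · omega
    · have hn' : n = 8 := by omega
      subst hn'
      norm_num
    · have hn' : n = 16 := by omega
      subst hn'
      norm_num
  · field_simp at heq
    have hZ : n * ↑s = (2 * n - 4) * 5 := by linear_combination (by exact_mod_cast heq : n * ↑s = 5 * (2 * n - 4))
    have hsB : s ≤ 9 := by nlinarith [hZ, hn, hs0]
    interval_cases s <;> push_cast at hZ
    · omega
    · omega
    · omega
    · omega
    · omega
    · have hn' : n = 5 := by omega
      subst hn'
      norm_num
    · omega
    · have hn' : n = 10 := by omega
      subst hn'
      norm_num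
    · have hn' : n = 20 := by omega
      subst hn'
      norm_num
  · field_simp at heq
    have hZ : n * ↑s = (n - 4) * 5 := by linear_combination (by exact_mod_cast heq : n * ↑s = 5 * (n - 4))
    have hsB : s ≤ 4 := by nlinarith [hZ, hn, hs0]
    interval_cases s <;> push_cast at hZ
    · have hn' : n = 5 := by omega
      subst hn'
      norm_num
    · omega
    · have hn' : n = 10 := by omega
      subst hn'
      norm_num
    · have hn' : n = 20 := by omega
      subst hn'
      norm_num
  · field_simp at heq
    have hZ : 2 * (n * ↑s) = (2 * n - 4) * 5 := by linear_combination (by exact_mod_cast heq : 2 * n * ↑s = 5 * (2 * n - 4))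
    have hsB : s ≤ 4 := by nlinarith [hZ, hn, hs0]
    interval_cases s <;> push_cast at hZ
    · omega
    · omega
    · have hn' : n = 5 := by omega
      subst hn'
      norm_num
    · have hn' : n = 10 := by omega
      subst hn'
      norm_num
  · field_simp at heq
    have hZ : 2 * (n * ↑s) = (n - 4) * 5 := by linear_combination (by exact_mod_cast heq : 2 * n * ↑s = 5 * (n - 4))
    have hsB : s ≤ 2 := by nlinarith [hZ, hn, hs0]
    interval_cases s <;> push_cast at hZ
    · omega
    · have hn' : n = 20 := by omega
      subst hn'
      norm_num
  · field_simp at heq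
    have hZ : 3 * (n * ↑s) = (2 * n - 4) * 7 := by linear_combination (by exact_mod_cast heq : 3 * n * ↑s = 7 * (2 * n - 4))
    have hsB : s ≤ 4 := by nlinarith [hZ, hn, hs0]
    interval_cases s <;> push_cast at hZ
    · omega
    · omega
    · omega
    · have hn' : n = 14 := by omega
      subst hn'
      norm_num
  · field_simp at heq
    have hZ : 3 * (n * ↑s) = (n - 4) * 7 := by linear_combination (by exact_mod_cast heq : 3 * n * ↑s = 7 * (n - 4))
    have hsB : s ≤ 2 := by nlinarith [hZ, hn, hs0]
    interval_cases s <;> push_cast at hZ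
    · have hn' : n = 7 := by omega
      subst hn'
      norm_num
    · omega
  · field_simp at heq
    have hZ : n * ↑s = (2 * n - 4) * 3 := by linear_combination (by exact_mod_cast heq : n * ↑s = 3 * (2 * n - 4))
    have hsB : s ≤ 5 := by nlinarith [hZ, hn, hs0]
    interval_cases s <;> push_cast at hZ
    · omega
    · omega
    · omega
    · have hn' : n = 6 := by omega
      subst hn'
      norm_num
    · have hn' : n = 12 := by omega
      subst hn'
      norm_num
  · field_simp at heq
    have hZ : n * ↑s = (n - 4) * 3 := by linear_combination (by exact_mod_cast heq : n * ↑s = 3 * (n - 4))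
    have hsB : s ≤ 2 := by nlinarith [hZ, hn, hs0]
    interval_cases s <;> push_cast at hZ
    · have hn' : n = 6 := by omega
      subst hn'
      norm_num
    · have hn' : n = 12 := by omega
      subst hn'
      norm_num
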